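/- Fix c > 0 and set u_n := (c+2)^{|n|·sin((π/2)·log₂(1+|n|))} for n ∈ ℤ, and α := 1 + π/(2·ln 2). Then for every n ∈ ℤ one has (c+2)^{−α} ≤ u_{n+1}/u_n ≤ (c+2)^{α}. -/

import Mathlib

noncomputable section
open Real

-- b * |log(1+a) - log(1+b)| ≤ 1 when a,b ≥ 0 and |a-b| ≤ 1
lemma aux_log (a b : ℝ) (ha : 0 ≤ a) (hb : 0 ≤ b) (hab : |a - b| ≤ 1) :
    b * |Real.log (1 + a) - Real.log (1 + b)| ≤ 1 := by
  have h1a : (0:ℝ) < 1 + a := by linarith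
  have h1b : (0:ℝ) < 1 + b := by linarith
  rcases le_total b a with h | h
  · have hd : 0 ≤ Real.log (1 + a) - Real.log (1 + b) := by
      have := Real.log_le_log h1b (by linarith : (1:ℝ)+b ≤ 1+a)
      linarith
    rw [abs_of_nonneg hd]
    have hle : Real.log (1 + a) - Real.log (1 + b) ≤ (a - b) / (1 + b) := by
      have := Real.log_le_sub_one_of_pos (x := (1+a)/(1+b)) (by positivity)
      rw [Real.log_div (by linarith) (by linarith)] at this
      have : Real.log (1+a) - Real.log (1+b) ≤ (1+a)/(1+b) - 1 := this
      have heq : (1+a)/(1+b) - 1 = (a-b)/(1+b) := by field_simp; ring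
      linarith [heq ▸ this]
    have hab1 : a - b ≤ 1 := by have := abs_le.1 hab; linarith [this.2]
    have : b * ((a - b) / (1 + b)) ≤ (a - b) := by
      rw [mul_div_assoc', div_le_iff₀ h1b]
      nlinarith
    calc b * (Real.log (1+a) - Real.log (1+b)) ≤ b * ((a-b)/(1+b)) := by
          apply mul_le_mul_of_nonneg_left hle hb
      _ ≤ a - b := this
      _ ≤ 1 := hab1
  · have hd : Real.log (1 + a) - Real.log (1 + b) ≤ 0 := by
      have := Real.log_le_log h1a (by linarith : (1:ℝ)+a ≤ 1+b)
      linarith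
    rw [abs_of_nonpos hd]
    have hle : Real.log (1 + b) - Real.log (1 + a) ≤ (b - a) / (1 + a) := by
      have := Real.log_le_sub_one_of_pos (x := (1+b)/(1+a)) (by positivity)
      rw [Real.log_div (by linarith) (by linarith)] at this
      have heq : (1+b)/(1+a) - 1 = (b-a)/(1+a) := by field_simp; ring
      linarith [heq ▸ this]
    have hba1 : b - a ≤ 1 := by have := abs_le.1 hab; linarith [this.1]
    have hb1a : b ≤ 1 + a := by linarith
    calc b * -(Real.log (1+a) - Real.log (1+b))
        = b * (Real.log (1+b) - Real.log (1+a)) := by ring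
      _ ≤ b * ((b-a)/(1+a)) := mul_le_mul_of_nonneg_left hle hb
      _ ≤ (1+a) * ((b-a)/(1+a)) := by
          apply mul_le_mul_of_nonneg_right hb1a
          exact div_nonneg (by linarith) (by linarith)
      _ = b - a := by field_simp
      _ ≤ 1 := hba1

lemma aux_key (a b : ℝ) (ha : 0 ≤ a) (hb : 0 ≤ b) (hab : |a - b| ≤ 1) :
    |a * Real.sin (Real.pi / 2 * Real.logb 2 (1 + a))
      - b * Real.sin (Real.pi / 2 * Real.logb 2 (1 + b))| ≤ 1 + Real.pi / (2 * Real.log 2) := by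
  set sa := Real.pi / 2 * Real.logb 2 (1 + a) with hsa
  set sb := Real.pi / 2 * Real.logb 2 (1 + b) with hsb
  have hsplit : a * Real.sin sa - b * Real.sin sb
      = (a - b) * Real.sin sa + b * (Real.sin sa - Real.sin sb) := by ring
  have h1 : |(a - b) * Real.sin sa| ≤ 1 := by
    rw [abs_mul]
    calc |a - b| * |Real.sin sa| ≤ 1 * 1 :=
        mul_le_mul hab (abs_le.2 ⟨Real.neg_one_le_sin sa, Real.sin_le_one sa⟩) (abs_nonneg _) zero_le_one
      _ = 1 := one_mul 1
  have hsin : |Real.sin sa - Real.sin sb| ≤ |sa - sb| := by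
    rw [Real.sin_sub_sin]
    calc |2 * Real.sin ((sa - sb)/2) * Real.cos ((sa + sb)/2)|
        = 2 * |Real.sin ((sa - sb)/2)| * |Real.cos ((sa + sb)/2)| := by
          rw [abs_mul, abs_mul]; norm_num
      _ ≤ 2 * |(sa - sb)/2| * 1 := by
          apply mul_le_mul _ (abs_le.2 ⟨Real.neg_one_le_cos _, Real.cos_le_one _⟩) (abs_nonneg _)
          · positivity
          · exact mul_le_mul_of_nonneg_left Real.abs_sin_le_abs (by norm_num)
      _ = |sa - sb| := by rw [abs_div, abs_two]; ring
  have hlog2 : (0:ℝ) < Real.log 2 := Real.log_pos (by norm_num)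
  have hdiff : |sa - sb| = Real.pi / (2 * Real.log 2) * |Real.log (1+a) - Real.log (1+b)| := by
    rw [hsa, hsb, Real.logb, Real.logb]
    rw [show Real.pi / 2 * (Real.log (1+a) / Real.log 2) - Real.pi / 2 * (Real.log (1+b) / Real.log 2)
        = Real.pi / (2 * Real.log 2) * (Real.log (1+a) - Real.log (1+b)) by field_simp]
    rw [abs_mul, abs_of_nonneg (by positivity : (0:ℝ) ≤ Real.pi / (2 * Real.log 2))]
  have h2 : b * |Real.sin sa - Real.sin sb| ≤ Real.pi / (2 * Real.log 2) := by
    calc b * |Real.sin sa - Real.sin sb| ≤ b * |sa - sb| :=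
        mul_le_mul_of_nonneg_left hsin hb
      _ = Real.pi / (2 * Real.log 2) * (b * |Real.log (1+a) - Real.log (1+b)|) := by
          rw [hdiff]; ring
      _ ≤ Real.pi / (2 * Real.log 2) * 1 := by
          apply mul_le_mul_of_nonneg_left (aux_log a b ha hb hab)
          positivity
      _ = Real.pi / (2 * Real.log 2) := mul_one _
  calc |a * Real.sin sa - b * Real.sin sb|
      = |(a - b) * Real.sin sa + b * (Real.sin sa - Real.sin sb)| := by rw [hsplit]
    _ ≤ |(a - b) * Real.sin sa| + |b * (Real.sin sa - Real.sin sb)| := abs_add_le _ _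
    _ ≤ 1 + Real.pi / (2 * Real.log 2) := by
        apply add_le_add h1
        rw [abs_mul, abs_of_nonneg hb]
        exact h2

theorem stmt10 (c : ℝ) (hc : 0 < c)
    (u : ℤ → ℝ)
    (hu : ∀ n : ℤ,
      u n = (c + 2) ^ (|(n : ℝ)| * Real.sin (Real.pi / 2 * Real.logb 2 (1 + |(n : ℝ)|)))) :
    ∀ n : ℤ,
      (c + 2) ^ (-(1 + Real.pi / (2 * Real.log 2))) ≤ u (n + 1) / u n ∧
      u (n + 1) / u n ≤ (c + 2) ^ (1 + Real.pi / (2 * Real.log 2)) := by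
  intro n
  have hpos : (0:ℝ) < c + 2 := by linarith
  have hone : (1:ℝ) ≤ c + 2 := by linarith
  set a := |((n + 1 : ℤ) : ℝ)| with ha'
  set b := |((n : ℤ) : ℝ)| with hb'
  have ha : 0 ≤ a := abs_nonneg _
  have hb : 0 ≤ b := abs_nonneg _
  have hab : |a - b| ≤ 1 := by
    rw [ha', hb']
    have h := abs_abs_sub_abs_le_abs_sub ((n + 1 : ℤ) : ℝ) ((n : ℤ) : ℝ)
    have he : ((n + 1 : ℤ) : ℝ) - ((n : ℤ) : ℝ) = 1 := by push_cast; ring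
    rw [he] at h
    simpa using h
  have key := aux_key a b ha hb hab
  set fa := a * Real.sin (Real.pi / 2 * Real.logb 2 (1 + a))
  set fb := b * Real.sin (Real.pi / 2 * Real.logb 2 (1 + b))
  have hratio : u (n + 1) / u n = (c + 2) ^ (fa - fb) := by
    rw [hu (n + 1), hu n, ← Real.rpow_sub hpos]
  rw [hratio]
  have hk := abs_le.1 key
  constructor
  · exact Real.rpow_le_rpow_of_exponent_le hone (by linarith [hk.1])
  · exact Real.rpow_le_rpow_of_exponent_le hone hk.2
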